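/- Let A be an n×n complex matrix and s ∈ ℂ be such that every eigenvalue λ of A satisfies Re λ < Re s. Then the function t ↦ e^{-st} · exp(tA) is integrable on [0,∞), the matrix sI - A is invertible, and ∫₀^∞ e^{-st} exp(tA) dt = (sI - A)^{-1}. -/

import Mathlib

open MeasureTheory Matrix Set

attribute [local instance] Matrix.linftyOpNormedAddCommGroup Matrix.linftyOpNormedRing
  Matrix.linftyOpNormedAlgebra

open scoped Nat

variable {n : ℕ}

variable {n : ℕ}

section

@[reducible]
noncomputable def myNormTop : TopologicalSpace (Matrix (Fin n) (Fin n) ℂ) :=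
  PseudoMetricSpace.toUniformSpace.toTopologicalSpace

attribute [local instance] myNormTop

lemma myExpSmulOne (c : ℂ) :
    NormedSpace.exp (c • (1 : Matrix (Fin n) (Fin n) ℂ)) = Complex.exp c • 1 := by
  rw [← Algebra.algebraMap_eq_smul_one, ← NormedSpace.algebraMap_exp_comm,
    Complex.exp_eq_exp_ℂ, Algebra.algebraMap_eq_smul_one]

lemma myExpShift (A : Matrix (Fin n) (Fin n) ℂ) (s : ℂ) (t : ℝ) :
    NormedSpace.exp (t • (A - s • 1)) = Complex.exp (-s * t) • NormedSpace.exp (t • A) := by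
  have h1 : t • (A - s • (1 : Matrix (Fin n) (Fin n) ℂ))
      = (-(s * t)) • (1 : Matrix (Fin n) (Fin n) ℂ) + t • A := by
    rw [← algebraMap_smul ℂ t (A - s • (1 : Matrix (Fin n) (Fin n) ℂ)),
      ← algebraMap_smul ℂ t A, Complex.coe_algebraMap]
    module
  have hcomm : Commute ((-(s * t)) • (1 : Matrix (Fin n) (Fin n) ℂ)) (t • A) :=
    (Commute.one_left (t • A)).smul_left _
  rw [h1, NormedSpace.exp_add_of_commute hcomm, myExpSmulOne, smul_mul_assoc, one_mul, neg_mul]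

lemma myPowDivFactLe (x : ℝ) (hx : 0 ≤ x) (k : ℕ) : x ^ k / k ! ≤ Real.exp x := by
  calc x ^ k / k ! ≤ ∑ i ∈ Finset.range (k + 1), x ^ i / i ! := by
        refine Finset.single_le_sum (f := fun i => x ^ i / i !) (fun i _ => by positivity) ?_
        simp
    _ ≤ Real.exp x := Real.sum_le_exp_of_nonneg hx _

lemma myExpNilMulVec (N : Matrix (Fin n) (Fin n) ℂ) (v : Fin n → ℂ) (k₀ : ℕ)
    (hv : N ^ k₀ *ᵥ v = 0) (t : ℝ) :
    NormedSpace.exp (t • N) *ᵥ v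
      = ∑ k ∈ Finset.range k₀, (((k ! : ℂ))⁻¹ * (t : ℂ) ^ k) • (N ^ k *ᵥ v) := by
  classical
  have hvk : ∀ k, k₀ ≤ k → N ^ k *ᵥ v = 0 := by
    intro k hk
    have : N ^ k = N ^ (k - k₀) * N ^ k₀ := by
      rw [← pow_add]; congr 1; omega
    rw [this, ← Matrix.mulVec_mulVec, hv, Matrix.mulVec_zero]
  let L : Matrix (Fin n) (Fin n) ℂ →ₗ[ℂ] (Fin n → ℂ) :=
    { toFun := fun X => X *ᵥ v
      map_add' := fun X Y => Matrix.add_mulVec X Y v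
      map_smul' := fun c X => Matrix.smul_mulVec c X v }
  let Lc : Matrix (Fin n) (Fin n) ℂ →L[ℂ] (Fin n → ℂ) := LinearMap.toContinuousLinearMap L
  have hexp : NormedSpace.exp (t • N) = ∑' k : ℕ, ((k ! : ℂ))⁻¹ • (t • N) ^ k := by
    rw [NormedSpace.exp_eq_tsum ℂ]
  have hsum : Summable fun k : ℕ => ((k ! : ℂ))⁻¹ • (t • N) ^ k :=
    NormedSpace.expSeries_summable' (𝕂 := ℂ) (t • N)
  have key : NormedSpace.exp (t • N) *ᵥ v
      = ∑' k : ℕ, (((k ! : ℂ))⁻¹ * (t : ℂ) ^ k) • (N ^ k *ᵥ v) := by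
    have h1 : NormedSpace.exp (t • N) *ᵥ v = Lc (∑' k : ℕ, ((k ! : ℂ))⁻¹ • (t • N) ^ k) := by
      rw [← hexp]; rfl
    rw [h1, Lc.map_tsum hsum]
    congr 1
    funext k
    have hLc : ∀ X : Matrix (Fin n) (Fin n) ℂ, Lc X = X *ᵥ v := fun X => rfl
    rw [Lc.map_smul, hLc, smul_pow, Matrix.smul_mulVec, ← algebraMap_smul ℂ (t ^ k) (N ^ k *ᵥ v),
      Complex.coe_algebraMap, smul_smul, Complex.ofReal_pow]
  rw [key]
  refine tsum_eq_sum ?_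
  intro k hk
  rw [hvk k (by simpa using hk), smul_zero]

lemma myGenEigBound (B : Matrix (Fin n) (Fin n) ℂ) (lam : ℂ) (v : Fin n → ℂ) (k₀ : ℕ)
    (hv : (B - lam • 1) ^ k₀ *ᵥ v = 0) {ε : ℝ} (hε : 0 < ε) :
    ∃ K : ℝ, 0 ≤ K ∧ ∀ t : ℝ, 0 ≤ t →
      ‖NormedSpace.exp (t • B) *ᵥ v‖ ≤ K * Real.exp ((lam.re + ε) * t) := by
  set N := B - lam • 1 with hN
  refine ⟨∑ k ∈ Finset.range k₀, ε⁻¹ ^ k * ‖N ^ k *ᵥ v‖, by positivity, fun t ht => ?_⟩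
  have hsplit : NormedSpace.exp (t • B) = Complex.exp (lam * t) • NormedSpace.exp (t • N) := by
    have h := myExpShift B lam t
    rw [← hN] at h
    rw [h, smul_smul, ← Complex.exp_add]
    rw [show lam * t + -lam * t = 0 by ring, Complex.exp_zero, one_smul]
  rw [hsplit, Matrix.smul_mulVec, norm_smul]
  have habs : ‖Complex.exp (lam * t)‖ = Real.exp (lam.re * t) := by
    rw [Complex.norm_exp]
    congr 1
    simp [Complex.mul_re]
  rw [habs, myExpNilMulVec N v k₀ hv t]
  calc Real.exp (lam.re * t) * ‖∑ k ∈ Finset.range k₀, (((k ! : ℂ))⁻¹ * (t : ℂ) ^ k) • (N ^ k *ᵥ v)‖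
      ≤ Real.exp (lam.re * t) * ∑ k ∈ Finset.range k₀, (t ^ k / k !) * ‖N ^ k *ᵥ v‖ := by
        refine mul_le_mul_of_nonneg_left ?_ (Real.exp_nonneg _)
        refine (norm_sum_le _ _).trans (Finset.sum_le_sum fun k _ => ?_)
        rw [norm_smul]
        refine mul_le_mul_of_nonneg_right (le_of_eq ?_) (norm_nonneg _)
        rw [norm_mul, norm_inv, norm_pow]
        simp [abs_of_nonneg ht, div_eq_inv_mul, Complex.norm_natCast]
    _ ≤ Real.exp (lam.re * t) *
          ∑ k ∈ Finset.range k₀, (ε⁻¹ ^ k * Real.exp (ε * t)) * ‖N ^ k *ᵥ v‖ := by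
        refine mul_le_mul_of_nonneg_left (Finset.sum_le_sum fun k _ => ?_) (Real.exp_nonneg _)
        refine mul_le_mul_of_nonneg_right ?_ (norm_nonneg _)
        have h1 : (ε * t) ^ k / k ! ≤ Real.exp (ε * t) :=
          myPowDivFactLe (ε * t) (by positivity) k
        have h2 : t ^ k / k ! = ε⁻¹ ^ k * ((ε * t) ^ k / k !) := by
          field_simp [mul_pow]
          rw [one_div, ← mul_pow, ← mul_assoc, inv_mul_cancel₀ hε.ne', one_mul]
        rw [h2]
        exact mul_le_mul_of_nonneg_left h1 (by positivity)
    _ = (∑ k ∈ Finset.range k₀, ε⁻¹ ^ k * ‖N ^ k *ᵥ v‖) * Real.exp ((lam.re + ε) * t) := by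
        rw [Finset.sum_mul, Finset.mul_sum]
        refine Finset.sum_congr rfl fun k _ => ?_
        rw [add_mul, Real.exp_add]
        ring

lemma myNormLeSumCols (X : Matrix (Fin n) (Fin n) ℂ) :
    ‖X‖ ≤ ∑ j : Fin n, ‖X *ᵥ Pi.single j 1‖ := by
  classical
  have h : ‖X‖₊ ≤ ∑ j : Fin n, ‖X *ᵥ Pi.single j 1‖₊ := by
    rw [Matrix.linfty_opNNNorm_def]
    refine Finset.sup_le fun i _ => Finset.sum_le_sum fun j _ => ?_
    have h1 : (X *ᵥ Pi.single j 1) i = X i j := by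
      simp [Matrix.mulVec, dotProduct_single]
    calc ‖X i j‖₊ = ‖(X *ᵥ Pi.single j 1) i‖₊ := by rw [h1]
      _ ≤ ‖X *ᵥ Pi.single j 1‖₊ := nnnorm_le_pi_nnnorm _ i
  calc ‖X‖ = ((‖X‖₊ : ℝ)) := rfl
    _ ≤ ((∑ j : Fin n, ‖X *ᵥ Pi.single j 1‖₊ : NNReal) : ℝ) := by exact_mod_cast h
    _ = ∑ j : Fin n, ‖X *ᵥ Pi.single j 1‖ := by push_cast; rfl

lemma myExpDecay (B : Matrix (Fin n) (Fin n) ℂ) (hB : ∀ μ ∈ spectrum ℂ B, μ.re < 0) :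
    ∃ C δ : ℝ, 0 < δ ∧ ∀ t : ℝ, 0 ≤ t →
      ‖NormedSpace.exp (t • B)‖ ≤ C * Real.exp (-δ * t) := by
  classical
  rcases isEmpty_or_nonempty (Fin n) with hemp | hne
  · refine ⟨0, 1, one_pos, fun t ht => ?_⟩
    have : NormedSpace.exp (t • B) = 0 := Subsingleton.elim _ _
    rw [this, norm_zero, zero_mul]
  · haveI : Nontrivial (Matrix (Fin n) (Fin n) ℂ) := by
      obtain ⟨i⟩ := hne
      refine ⟨0, 1, fun h => ?_⟩
      have := congr_fun (congr_fun h i) i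
      simp [Matrix.one_apply] at this
    have hfin : (spectrum ℂ B).Finite := Matrix.finite_spectrum B
    have hnes : (spectrum ℂ B).Nonempty := spectrum.nonempty B
    have hnefs : hfin.toFinset.Nonempty := by
      rwa [Set.Finite.toFinset_nonempty]
    set m : ℝ := hfin.toFinset.sup' hnefs (fun μ => μ.re) with hm
    have hm0 : m < 0 := by
      rw [hm, Finset.sup'_lt_iff]
      intro μ hμ
      exact hB μ (hfin.mem_toFinset.mp hμ)
    set δ : ℝ := -m / 2 with hδdef
    have hδ : 0 < δ := by rw [hδdef]; linarith
    have hmem : ∀ μ ∈ spectrum ℂ B, μ.re + δ ≤ -δ := by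
      intro μ hμ
      have : μ.re ≤ m := Finset.le_sup' (f := fun μ => μ.re) (hfin.mem_toFinset.mpr hμ)
      rw [hδdef]; linarith
    -- column bounds
    have hcol : ∀ j : Fin n, ∃ K : ℝ, 0 ≤ K ∧ ∀ t : ℝ, 0 ≤ t →
        ‖NormedSpace.exp (t • B) *ᵥ Pi.single j 1‖ ≤ K * Real.exp (-δ * t) := by
      intro j
      set f : Module.End ℂ (Fin n → ℂ) := Matrix.toLin' B with hf
      have htop : (Pi.single j 1 : Fin n → ℂ) ∈ ⨆ μ : ℂ, f.maxGenEigenspace μ := by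
        rw [Module.End.iSup_maxGenEigenspace_eq_top]
        trivial
      rw [Submodule.mem_iSup_iff_exists_finsupp] at htop
      obtain ⟨c, hc, hcsum⟩ := htop
      -- each eigenvector piece has a bound
      have hpiece : ∀ μ : ℂ, ∃ K : ℝ, 0 ≤ K ∧ (μ ∈ c.support → ∀ t : ℝ, 0 ≤ t →
          ‖NormedSpace.exp (t • B) *ᵥ c μ‖ ≤ K * Real.exp (-δ * t)) := by
        intro μ
        by_cases hμs : μ ∈ c.support
        · -- μ is an eigenvalue
          have hcc := hc μ
          rw [Module.End.mem_maxGenEigenspace] at hcc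
          obtain ⟨k, hk⟩ := hcc
          have hck0 : c μ ≠ 0 := Finsupp.mem_support_iff.mp hμs
          have hspecμ : μ ∈ spectrum ℂ B := by
            have hgen : f.HasGenEigenvalue μ k := by
              rw [Module.End.hasGenEigenvalue_iff, Submodule.ne_bot_iff]
              exact ⟨c μ, Module.End.mem_genEigenspace_nat.mpr hk, hck0⟩
            have heig : f.HasEigenvalue μ := Module.End.hasEigenvalue_of_hasGenEigenvalue hgen
            have hsp : μ ∈ spectrum ℂ f := Module.End.hasEigenvalue_iff_mem_spectrum.mp heig
            have hfB : f = Matrix.toLinAlgEquiv' B :=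
              LinearMap.ext fun w => by
                simp [hf, Matrix.toLin'_apply, Matrix.toLinAlgEquiv'_apply]
            rwa [hfB, AlgEquiv.spectrum_eq] at hsp
          have hmat : ((B - μ • 1) ^ k) *ᵥ (c μ) = 0 := by
            have hfB : f = Matrix.toLinAlgEquiv' B :=
              LinearMap.ext fun w => by
                simp [hf, Matrix.toLin'_apply, Matrix.toLinAlgEquiv'_apply]
            have h2 : (Matrix.toLinAlgEquiv' ((B - μ • 1) ^ k)) (c μ) = 0 := by
              rw [map_pow, map_sub, _root_.map_smul, _root_.map_one, ← hfB]
              exact hk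
            rwa [Matrix.toLinAlgEquiv'_apply] at h2
          obtain ⟨K, hK0, hKb⟩ := myGenEigBound B μ (c μ) k hmat hδ
          refine ⟨K, hK0, fun _ t ht => (hKb t ht).trans ?_⟩
          refine mul_le_mul_of_nonneg_left ?_ hK0
          exact Real.exp_le_exp.mpr (mul_le_mul_of_nonneg_right (hmem μ hspecμ) ht)
        · exact ⟨0, le_refl 0, fun h => absurd h hμs⟩
      choose Kp hKp0 hKp using hpiece
      refine ⟨∑ μ ∈ c.support, Kp μ, Finset.sum_nonneg fun μ _ => hKp0 μ, fun t ht => ?_⟩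
      have hsum2 : NormedSpace.exp (t • B) *ᵥ (Pi.single j 1 : Fin n → ℂ)
          = ∑ μ ∈ c.support, NormedSpace.exp (t • B) *ᵥ c μ := by
        conv_lhs => rw [← hcsum]
        rw [Finsupp.sum, ← Matrix.mulVecLin_apply, map_sum]
        simp [Matrix.mulVecLin_apply]
      rw [hsum2, Finset.sum_mul]
      refine (norm_sum_le _ _).trans (Finset.sum_le_sum fun μ hμ => ?_)
      exact hKp μ hμ t ht
    choose g hg0 hg using hcol
    refine ⟨∑ j : Fin n, g j, δ, hδ, fun t ht => ?_⟩
    calc ‖NormedSpace.exp (t • B)‖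
        ≤ ∑ j : Fin n, ‖NormedSpace.exp (t • B) *ᵥ Pi.single j 1‖ :=
          myNormLeSumCols _
      _ ≤ ∑ j : Fin n, g j * Real.exp (-δ * t) :=
          Finset.sum_le_sum fun j _ => hg j t ht
      _ = (∑ j : Fin n, g j) * Real.exp (-δ * t) := by rw [Finset.sum_mul]

end

/-- If every eigenvalue `λ` of the `n×n` complex matrix `A` satisfies `Re λ < Re s`, then
`t ↦ e^{-st} exp(tA)` is integrable on `[0,∞)`, the matrix `sI - A` is invertible, and the
one-sided Laplace transform of the matrix exponential is the resolvent:
`∫₀^∞ e^{-st} exp(tA) dt = (sI - A)⁻¹`. -/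
theorem laplace_matrix_exp_eq_resolvent (n : ℕ) (A : Matrix (Fin n) (Fin n) ℂ) (s : ℂ)
    (hspec : ∀ μ ∈ spectrum ℂ A, μ.re < s.re) :
    @IntegrableOn ℝ _ _ PseudoMetricSpace.toUniformSpace.toTopologicalSpace _
      (fun t : ℝ => Complex.exp (-s * t) • NormedSpace.exp (t • A)) (Ioi 0) volume ∧
    IsUnit (s • (1 : Matrix (Fin n) (Fin n) ℂ) - A) ∧
    (∫ t in Ioi (0 : ℝ), Complex.exp (-s * t) • NormedSpace.exp (t • A))
      = (s • (1 : Matrix (Fin n) (Fin n) ℂ) - A)⁻¹ := by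
  classical
  letI : TopologicalSpace (Matrix (Fin n) (Fin n) ℂ) :=
    PseudoMetricSpace.toUniformSpace.toTopologicalSpace
  show IntegrableOn (fun t : ℝ => Complex.exp (-s * t) • NormedSpace.exp (t • A)) (Ioi 0) ∧
    IsUnit (s • (1 : Matrix (Fin n) (Fin n) ℂ) - A) ∧
    (∫ t in Ioi (0 : ℝ), Complex.exp (-s * t) • NormedSpace.exp (t • A))
      = (s • (1 : Matrix (Fin n) (Fin n) ℂ) - A)⁻¹
  set B : Matrix (Fin n) (Fin n) ℂ := A - s • 1 with hBdef
  have hBspec : ∀ μ ∈ spectrum ℂ B, μ.re < 0 := by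
    intro μ hμ
    have hkey : (algebraMap ℂ (Matrix (Fin n) (Fin n) ℂ)) (μ + s) - A
        = algebraMap ℂ (Matrix (Fin n) (Fin n) ℂ) μ - B := by
      rw [hBdef]
      simp only [Algebra.algebraMap_eq_smul_one, add_smul]
      abel
    have h2 : μ + s ∈ spectrum ℂ A := by
      rw [spectrum.mem_iff, hkey]
      exact spectrum.mem_iff.mp hμ
    have h3 := hspec _ h2
    simp only [Complex.add_re] at h3
    linarith
  obtain ⟨C, δ, hδ, hC⟩ := myExpDecay B hBspec
  have hEq : ∀ t : ℝ, Complex.exp (-s * t) • NormedSpace.exp (t • A)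
      = NormedSpace.exp (t • B) := fun t => (myExpShift A s t).symm
  set E : ℝ → Matrix (Fin n) (Fin n) ℂ := fun t => NormedSpace.exp (t • B) with hE
  have hcont : Continuous E :=
    NormedSpace.exp_continuous.comp (continuous_id.smul continuous_const)
  have hint : IntegrableOn E (Ioi (0 : ℝ)) := by
    refine Integrable.mono' ((exp_neg_integrableOn_Ioi 0 hδ).const_mul C)
      hcont.aestronglyMeasurable.restrict ?_
    filter_upwards [ae_restrict_mem measurableSet_Ioi] with t ht
    exact hC t (le_of_lt ht)
  have htend : Filter.Tendsto E Filter.atTop (nhds 0) := by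
    refine squeeze_zero_norm' (a := fun t : ℝ => C * Real.exp (-δ * t)) ?_ ?_
    · filter_upwards [Filter.eventually_ge_atTop (0 : ℝ)] with t ht
      exact hC t ht
    · have h1 : Filter.Tendsto (fun t : ℝ => -δ * t) Filter.atTop Filter.atBot :=
        Filter.Tendsto.const_mul_atTop_of_neg (by linarith) Filter.tendsto_id
      have h2 : Filter.Tendsto (fun t : ℝ => Real.exp (-δ * t)) Filter.atTop (nhds 0) :=
        Real.tendsto_exp_atBot.comp h1
      simpa using h2.const_mul C
  have hEexpR : E = fun t : ℝ => NormedSpace.exp (t • B) := by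
    funext t
    rfl
  have hderiv1 : ∀ t ∈ Ici (0 : ℝ), HasDerivAt E (B * E t) t := by
    intro t _
    have h := hasDerivAt_exp_smul_const' (𝕂 := ℝ) B t
    rw [hEexpR]
    exact h
  have hderiv2 : ∀ t ∈ Ici (0 : ℝ), HasDerivAt E (E t * B) t := by
    intro t _
    have h := hasDerivAt_exp_smul_const (𝕂 := ℝ) B t
    rw [hEexpR]
    exact h
  have hE0 : E 0 = 1 := by
    simp only [hE, zero_smul, NormedSpace.exp_zero]
  have hintB : IntegrableOn (fun t => B * E t) (Ioi (0 : ℝ)) := by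
    have := (ContinuousLinearMap.mul ℝ (Matrix (Fin n) (Fin n) ℂ) B).integrable_comp hint
    exact this
  have hintB' : IntegrableOn (fun t => E t * B) (Ioi (0 : ℝ)) := by
    have := ((ContinuousLinearMap.mul ℝ (Matrix (Fin n) (Fin n) ℂ)).flip B).integrable_comp hint
    exact this
  have h1 : ∫ t in Ioi (0 : ℝ), B * E t = 0 - E 0 :=
    integral_Ioi_of_hasDerivAt_of_tendsto' hderiv1 hintB htend
  have h2 : ∫ t in Ioi (0 : ℝ), E t * B = 0 - E 0 :=
    integral_Ioi_of_hasDerivAt_of_tendsto' hderiv2 hintB' htend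
  set I : Matrix (Fin n) (Fin n) ℂ := ∫ t in Ioi (0 : ℝ), E t with hI
  have hBI : B * I = -1 := by
    have hcomm := (ContinuousLinearMap.mul ℝ (Matrix (Fin n) (Fin n) ℂ) B).integral_comp_comm hint
    calc B * I = ∫ t in Ioi (0 : ℝ), B * E t := by
          rw [hI]
          simpa using hcomm.symm
      _ = 0 - E 0 := h1
      _ = -1 := by rw [hE0]; simp
  have hIB : I * B = -1 := by
    have hcomm :=
      ((ContinuousLinearMap.mul ℝ (Matrix (Fin n) (Fin n) ℂ)).flip B).integral_comp_comm hint
    calc I * B = ∫ t in Ioi (0 : ℝ), E t * B := by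
          rw [hI]
          simpa using hcomm.symm
      _ = 0 - E 0 := h2
      _ = -1 := by rw [hE0]; simp
  have hnegB : s • (1 : Matrix (Fin n) (Fin n) ℂ) - A = -B := by
    rw [hBdef, neg_sub]
  have hUnit1 : (s • (1 : Matrix (Fin n) (Fin n) ℂ) - A) * I = 1 := by
    rw [hnegB, neg_mul, hBI, neg_neg]
  have hUnit2 : I * (s • (1 : Matrix (Fin n) (Fin n) ℂ) - A) = 1 := by
    rw [hnegB, mul_neg, hIB, neg_neg]
  refine ⟨?_, ?_, ?_⟩
  · have heqfun : (fun t : ℝ => Complex.exp (-s * t) • NormedSpace.exp (t • A)) = E :=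
      funext hEq
    rw [heqfun]
    exact hint
  · exact ⟨⟨s • (1 : Matrix (Fin n) (Fin n) ℂ) - A, I, hUnit1, hUnit2⟩, rfl⟩
  · calc (∫ t in Ioi (0 : ℝ), Complex.exp (-s * t) • NormedSpace.exp (t • A))
        = I := by
          rw [hI]
          exact integral_congr_ae (Filter.Eventually.of_forall fun t => hEq t)
      _ = (s • (1 : Matrix (Fin n) (Fin n) ℂ) - A)⁻¹ := (Matrix.inv_eq_right_inv hUnit1).symm
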